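/- Let μ be a probability measure on ℤ^d whose jump generating function P(α) = Σ_{k∈ℤ^d} exp(α·k) μ(k) is finite on a neighborhood of D = {α ∈ ℝ^d : P(α) ≤ 1}, and suppose the associated random walk is irreducible and has nonzero mean. Then the set D is compact and strictly convex. -/

import Mathlib

open scoped BigOperators RealInnerProductSpace
open Filter MeasureTheory Classical

attribute [local instance] Classical.propDecidable

noncomputable section

abbrev V (d : ℕ) := EuclideanSpace ℝ (Fin d)
abbrev Zd (d : ℕ) := Fin d → ℤ

/-- Embedding of lattice points into ℝ^d. -/
def toV {d : ℕ} (m : Zd d) : V d := WithLp.toLp 2 (fun i => (m i : ℝ))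

/-- Scalar product α·m of a real vector with a lattice point. -/
def dotZ {d : ℕ} (α : V d) (m : Zd d) : ℝ := ∑ i, α i * (m i : ℝ)

/-- n-step transition probability P_0(Z(n) = m) of the homogeneous walk with step law μ. -/
def stepProb {d : ℕ} (μ : Zd d → ℝ) : ℕ → Zd d → ℝ
  | 0 => fun m => if m = 0 then 1 else 0
  | n + 1 => fun m => ∑' j : Zd d, stepProb μ n j * μ (m - j)

/-- P_k(Z(n) = m, τ > n) for the walk killed at the first exit from C. -/
def killedProb {d : ℕ} (μ : Zd d → ℝ) (C : Set (V d)) (k : Zd d) : ℕ → Zd d → ℝ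
  | 0 => fun m => if m = k ∧ toV m ∈ C then 1 else 0
  | n + 1 => fun m =>
      if toV m ∈ C then ∑' j : Zd d, killedProb μ C k n j * μ (m - j) else 0

/-- P_k(Z(τ) = m, τ = n). -/
def exitProb {d : ℕ} (μ : Zd d → ℝ) (C : Set (V d)) (k : Zd d) : ℕ → Zd d → ℝ
  | 0 => fun m => if m = k ∧ toV m ∉ C then 1 else 0
  | n + 1 => fun m =>
      if toV m ∉ C then ∑' j : Zd d, killedProb μ C k n j * μ (m - j) else 0

/-- P_k(Z(τ) = m, τ < ∞). -/
def exitTotal {d : ℕ} (μ : Zd d → ℝ) (C : Set (V d)) (k m : Zd d) : ℝ :=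
  ∑' n : ℕ, exitProb μ C k n m

/-- Green function G_C(k,m) of the walk killed at the exit from C. -/
def GreenC {d : ℕ} (μ : Zd d → ℝ) (C : Set (V d)) (k m : Zd d) : ℝ :=
  ∑' n : ℕ, killedProb μ C k n m

/-- Green function of the free walk. -/
def Green {d : ℕ} (μ : Zd d → ℝ) (k m : Zd d) : ℝ :=
  ∑' n : ℕ, stepProb μ n (m - k)

/-- Monomial x^m = x₁^{m₁}⋯x_d^{m_d} for x ∈ ℂ^d, m ∈ ℤ^d. -/
def cpow {d : ℕ} (x : Fin d → ℂ) (m : Zd d) : ℂ := ∏ i, x i ^ (m i)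

/-- Monomial r^m for r ∈ ℝ^d, m ∈ ℤ^d. -/
def rpowZ {d : ℕ} (r : Fin d → ℝ) (m : Zd d) : ℝ := ∏ i, r i ^ (m i)

/-- Multivariate generating function 𝒫(x) = Σ_k μ(k) x^k. -/
def calP {d : ℕ} (μ : Zd d → ℝ) (x : Fin d → ℂ) : ℂ := ∑' k : Zd d, (μ k : ℂ) * cpow x k

/-- Real version of the generating function on (0,∞)^d. -/
def calPR {d : ℕ} (μ : Zd d → ℝ) (r : Fin d → ℝ) : ℝ := ∑' k : Zd d, μ k * rpowZ r k

/-- Jump generating function P(α) = Σ_k e^{α·k} μ(k). -/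
def Pgen {d : ℕ} (μ : Zd d → ℝ) (α : V d) : ℝ := ∑' k : Zd d, μ k * Real.exp (dotZ α k)

/-- The set D = {α : P(α) ≤ 1}. -/
def Dset {d : ℕ} (μ : Zd d → ℝ) : Set (V d) := {α | Pgen μ α ≤ 1}

/-- μ is a probability measure on ℤ^d. -/
def IsProb {d : ℕ} (μ : Zd d → ℝ) : Prop := (∀ k, 0 ≤ μ k) ∧ HasSum μ 1

/-- Irreducibility of the walk in ℤ^d: every point is reachable from 0. -/
def IrreducibleWalk {d : ℕ} (μ : Zd d → ℝ) : Prop := ∀ m : Zd d, ∃ n, 0 < stepProb μ n m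

/-- P is finite on a neighborhood of D. -/
def FiniteNearD {d : ℕ} (μ : Zd d → ℝ) : Prop :=
  ∃ U : Set (V d), IsOpen U ∧ Dset μ ⊆ U ∧
    ∀ α ∈ U, Summable (fun k : Zd d => μ k * Real.exp (dotZ α k))

/-- The mean jump Σ_k k μ(k) is nonzero. -/
def NonzeroMean {d : ℕ} (μ : Zd d → ℝ) : Prop :=
  ∃ i : Fin d, (∑' k : Zd d, (k i : ℝ) * μ k) ≠ 0

/-- Hypotheses (A1). -/
def A1 {d : ℕ} (μ : Zd d → ℝ) : Prop :=
  IsProb μ ∧ IrreducibleWalk μ ∧ FiniteNearD μ ∧ NonzeroMean μ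

/-- C is an open cone with vertex 0. -/
def IsOpenCone {d : ℕ} (C : Set (V d)) : Prop :=
  IsOpen C ∧ ∀ x ∈ C, ∀ c : ℝ, 0 < c → c • x ∈ C

/-- Hypothesis (A2): irreducibility of the killed walk on ℤ^d ∩ C. -/
def A2 {d : ℕ} (μ : Zd d → ℝ) (C : Set (V d)) : Prop :=
  ∀ k m : Zd d, toV k ∈ C → toV m ∈ C → ∃ n, 0 < killedProb μ C k n m

/-- The harmonic function h_α(k) = e^{α·k} − E_k(e^{α·Z(τ)}; τ<∞). -/
def hFun {d : ℕ} (μ : Zd d → ℝ) (C : Set (V d)) (α : V d) (k : Zd d) : ℝ :=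
  Real.exp (dotZ α k) - ∑' m : Zd d, exitTotal μ C k m * Real.exp (dotZ α m)

/-- α ↦ α·u attains its maximum over D at αu. -/
def IsMaxOn' {d : ℕ} (μ : Zd d → ℝ) (u αu : V d) : Prop :=
  αu ∈ Dset μ ∧ ∀ β ∈ Dset μ, ⟪β, u⟫ ≤ ⟪αu, u⟫

/-- The generating function H_k(x) = Σ_{m ∈ ℤ^d∩C} G_C(k,m) x^m. -/
def Hfun {d : ℕ} (μ : Zd d → ℝ) (C : Set (V d)) (k : Zd d) (x : Fin d → ℂ) : ℂ :=
  ∑' m : Zd d, if toV m ∈ C then (GreenC μ C k m : ℂ) * cpow x m else 0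

/-- The generating function F_k(x) = Σ_{m ∈ ℤ^d∖C} P_k(Z(τ)=m, τ<∞) x^m. -/
def Ffun {d : ℕ} (μ : Zd d → ℝ) (C : Set (V d)) (k : Zd d) (x : Fin d → ℂ) : ℂ :=
  ∑' m : Zd d, if toV m ∉ C then (exitTotal μ C k m : ℂ) * cpow x m else 0

section Aux

variable {d : ℕ} {μ : Zd d → ℝ}

lemma dotZ_zero_right (α : V d) : dotZ α (0 : Zd d) = 0 := by
  simp [dotZ]

lemma dotZ_zero_left (m : Zd d) : dotZ (0 : V d) m = 0 := by
  simp [dotZ]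

lemma dotZ_add (α : V d) (a b : Zd d) : dotZ α (a + b) = dotZ α a + dotZ α b := by
  unfold dotZ
  rw [← Finset.sum_add_distrib]
  refine Finset.sum_congr rfl fun i _ => ?_
  have : ((a + b) i : ℝ) = (a i : ℝ) + (b i : ℝ) := by
    simp [Pi.add_apply]
  rw [this]; ring

lemma dotZ_split (α : V d) (m j : Zd d) : dotZ α m = dotZ α j + dotZ α (m - j) := by
  have h : j + (m - j) = m := by abel
  conv_lhs => rw [← h]
  rw [dotZ_add]

lemma dotZ_neg (α : V d) (m : Zd d) : dotZ α (-m) = - dotZ α m := by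
  unfold dotZ
  rw [← Finset.sum_neg_distrib]
  refine Finset.sum_congr rfl fun i _ => ?_
  have : ((-m) i : ℝ) = -(m i : ℝ) := by simp [Pi.neg_apply]
  rw [this]; ring

lemma dotZ_combo (α β : V d) (s t : ℝ) (k : Zd d) :
    dotZ (s • α + t • β) k = s * dotZ α k + t * dotZ β k := by
  unfold dotZ
  rw [Finset.mul_sum, Finset.mul_sum, ← Finset.sum_add_distrib]
  refine Finset.sum_congr rfl fun i _ => ?_
  have : (s • α + t • β) i = s * α i + t * β i := by
    simp [PiLp.add_apply, PiLp.smul_apply, smul_eq_mul]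
  rw [this]; ring

/-- the lattice basis vector -/
def eZ {d : ℕ} (i : Fin d) : Zd d := fun j => if j = i then 1 else 0

lemma dotZ_eZ (α : V d) (i : Fin d) : dotZ α (eZ i) = α i := by
  unfold dotZ eZ
  rw [Finset.sum_eq_single i]
  · simp
  · intro j _ hj; simp [hj]
  · intro h; exact absurd (Finset.mem_univ i) h

lemma mu_nonneg (h : IsProb μ) (k : Zd d) : 0 ≤ μ k := h.1 k

lemma mu_le_one (h : IsProb μ) (k : Zd d) : μ k ≤ 1 :=
  le_hasSum h.2 k fun j _ => h.1 j

lemma stepProb_nonneg (h : IsProb μ) : ∀ n m, 0 ≤ stepProb μ n m := by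
  intro n
  induction n with
  | zero => intro m; unfold stepProb; split <;> norm_num
  | succ n ih =>
    intro m
    unfold stepProb
    exact tsum_nonneg fun j => mul_nonneg (ih j) (h.1 _)

lemma zero_mem_Dset (h : IsProb μ) : (0 : V d) ∈ Dset μ := by
  have : Pgen μ (0 : V d) = 1 := by
    unfold Pgen
    have : ∀ k : Zd d, μ k * Real.exp (dotZ (0 : V d) k) = μ k := by
      intro k; rw [dotZ_zero_left, Real.exp_zero, mul_one]
    rw [tsum_congr this, h.2.tsum_eq]
  simp [Dset, this]

lemma summable_on_D (hA1 : A1 μ) {α : V d} (hα : α ∈ Dset μ) :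
    Summable fun k : Zd d => μ k * Real.exp (dotZ α k) := by
  obtain ⟨U, _, hDU, hU⟩ := hA1.2.2.1
  exact hU α (hDU hα)

/-- Key convolution bound, in `ℝ≥0∞`. -/
lemma key_bound (hA1 : A1 μ) :
    ∀ n, ∀ α ∈ Dset μ,
      (∑' m : Zd d, ENNReal.ofReal (stepProb μ n m * Real.exp (dotZ α m))) ≤ 1 := by
  obtain ⟨hprob, hirr, hfin, hmean⟩ := hA1
  intro n
  induction n with
  | zero =>
    intro α hα
    have h0 : ∀ m : Zd d, m ≠ 0 →
        ENNReal.ofReal (stepProb μ 0 m * Real.exp (dotZ α m)) = 0 := by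
      intro m hm
      have : stepProb μ 0 m = 0 := by unfold stepProb; simp [hm]
      simp [this]
    rw [tsum_eq_single 0 h0]
    have : stepProb μ 0 (0 : Zd d) = 1 := by unfold stepProb; simp
    simp [this, dotZ_zero_right]
  | succ n ih =>
    intro α hα
    have h0D : (0 : V d) ∈ Dset μ := zero_mem_Dset hprob
    -- summability of stepProb μ n
    have hs0 : (∑' m : Zd d, ENNReal.ofReal (stepProb μ n m)) ≤ 1 := by
      have := ih 0 h0D
      refine le_trans (le_of_eq (tsum_congr fun m => ?_)) this
      rw [dotZ_zero_left, Real.exp_zero, mul_one]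
    have hsum_n : Summable (stepProb μ n) := by
      have h := ENNReal.summable_toReal (lt_of_le_of_lt hs0 ENNReal.one_lt_top).ne
      refine h.congr fun m => ?_
      exact ENNReal.toReal_ofReal (stepProb_nonneg hprob n m)
    have hsum_conv : ∀ m : Zd d, Summable fun j : Zd d => stepProb μ n j * μ (m - j) := by
      intro m
      refine Summable.of_nonneg_of_le
        (fun j => mul_nonneg (stepProb_nonneg hprob n j) (hprob.1 _))
        (fun j => ?_) hsum_n
      calc stepProb μ n j * μ (m - j) ≤ stepProb μ n j * 1 :=
            mul_le_mul_of_nonneg_left (mu_le_one hprob _) (stepProb_nonneg hprob n j)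
        _ = stepProb μ n j := mul_one _
    have hsumα : Summable fun k : Zd d => μ k * Real.exp (dotZ α k) := by
      obtain ⟨U, _, hDU, hU⟩ := hfin
      exact hU α (hDU hα)
    -- step A : rewrite each term as a tsum
    have hA : ∀ m : Zd d,
        ENNReal.ofReal (stepProb μ (n+1) m * Real.exp (dotZ α m)) =
        ∑' j : Zd d, ENNReal.ofReal ((stepProb μ n j * Real.exp (dotZ α j)) *
          (μ (m - j) * Real.exp (dotZ α (m - j)))) := by
      intro m
      have h1 : stepProb μ (n+1) m * Real.exp (dotZ α m) =
          ∑' j : Zd d, stepProb μ n j * μ (m - j) * Real.exp (dotZ α m) := by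
        have hd : stepProb μ (n+1) m = ∑' j : Zd d, stepProb μ n j * μ (m - j) := rfl
        rw [hd, ← (hsum_conv m).tsum_mul_right]
      rw [h1, ENNReal.ofReal_tsum_of_nonneg]
      · refine tsum_congr fun j => ?_
        congr 1
        rw [dotZ_split α m j, Real.exp_add]
        ring
      · intro j
        exact mul_nonneg (mul_nonneg (stepProb_nonneg hprob n j) (hprob.1 _))
          (Real.exp_pos _).le
      · exact (hsum_conv m).mul_right _
    calc (∑' m : Zd d, ENNReal.ofReal (stepProb μ (n+1) m * Real.exp (dotZ α m)))
        = ∑' m : Zd d, ∑' j : Zd d,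
            ENNReal.ofReal ((stepProb μ n j * Real.exp (dotZ α j)) *
              (μ (m - j) * Real.exp (dotZ α (m - j)))) := tsum_congr hA
      _ = ∑' j : Zd d, ∑' m : Zd d,
            ENNReal.ofReal ((stepProb μ n j * Real.exp (dotZ α j)) *
              (μ (m - j) * Real.exp (dotZ α (m - j)))) := ENNReal.tsum_comm
      _ = ∑' j : Zd d, ∑' m : Zd d,
            ENNReal.ofReal (stepProb μ n j * Real.exp (dotZ α j)) *
              ENNReal.ofReal (μ (m - j) * Real.exp (dotZ α (m - j))) := by
            refine tsum_congr fun j => tsum_congr fun m => ?_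
            exact ENNReal.ofReal_mul
              (mul_nonneg (stepProb_nonneg hprob n j) (Real.exp_pos _).le)
      _ = ∑' j : Zd d, ENNReal.ofReal (stepProb μ n j * Real.exp (dotZ α j)) *
            ∑' m : Zd d, ENNReal.ofReal (μ (m - j) * Real.exp (dotZ α (m - j))) := by
            refine tsum_congr fun j => ?_
            exact ENNReal.tsum_mul_left
      _ ≤ ∑' j : Zd d, ENNReal.ofReal (stepProb μ n j * Real.exp (dotZ α j)) * 1 := by
            refine ENNReal.tsum_le_tsum fun j => ?_
            refine mul_le_mul_right ?_ _
            have hre : (∑' m : Zd d, ENNReal.ofReal (μ (m - j) * Real.exp (dotZ α (m - j))))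
                = ∑' k : Zd d, ENNReal.ofReal (μ k * Real.exp (dotZ α k)) :=
              (Equiv.subRight j).tsum_eq fun k => ENNReal.ofReal (μ k * Real.exp (dotZ α k))
            rw [hre, ← ENNReal.ofReal_tsum_of_nonneg
              (fun k => mul_nonneg (hprob.1 k) (Real.exp_pos _).le) hsumα]
            exact ENNReal.ofReal_le_one.2 hα
      _ = ∑' j : Zd d, ENNReal.ofReal (stepProb μ n j * Real.exp (dotZ α j)) := by
            simp
      _ ≤ 1 := ih α hα

lemma term_le_one (hA1 : A1 μ) {α : V d} (hα : α ∈ Dset μ) (n : ℕ) (m : Zd d) :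
    stepProb μ n m * Real.exp (dotZ α m) ≤ 1 := by
  have h1 := key_bound hA1 n α hα
  have h2 : ENNReal.ofReal (stepProb μ n m * Real.exp (dotZ α m)) ≤ 1 :=
    le_trans (ENNReal.le_tsum m) h1
  exact ENNReal.ofReal_le_one.1 h2

lemma dot_bounded (hA1 : A1 μ) (m : Zd d) : ∃ B : ℝ, ∀ α ∈ Dset μ, dotZ α m ≤ B := by
  obtain ⟨n, hn⟩ := hA1.2.1 m
  refine ⟨Real.log (1 / stepProb μ n m), fun α hα => ?_⟩
  have h1 := term_le_one hA1 hα n m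
  have h2 : Real.exp (dotZ α m) ≤ 1 / stepProb μ n m := by
    rw [le_div_iff₀ hn]
    linarith [h1]
  exact (Real.le_log_iff_exp_le (by positivity)).2 h2

lemma isBounded_Dset (hA1 : A1 μ) : Bornology.IsBounded (Dset μ) := by
  have hM : ∀ i : Fin d, ∃ M : ℝ, ∀ α ∈ Dset μ, |α i| ≤ M := by
    intro i
    obtain ⟨B1, hB1⟩ := dot_bounded hA1 (eZ i)
    obtain ⟨B2, hB2⟩ := dot_bounded hA1 (-(eZ i))
    refine ⟨max B1 B2, fun α hα => ?_⟩
    have h1 : α i ≤ B1 := by rw [← dotZ_eZ α i]; exact hB1 α hα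
    have h2 : -(α i) ≤ B2 := by
      rw [← dotZ_eZ α i, ← dotZ_neg]; exact hB2 α hα
    rw [abs_le]
    constructor
    · linarith [le_max_right B1 B2]
    · linarith [le_max_left B1 B2]
  choose M hMsp using hM
  rw [Metric.isBounded_iff_subset_closedBall 0]
  refine ⟨Real.sqrt (∑ i, M i ^ 2), fun α hα => ?_⟩
  rw [Metric.mem_closedBall, dist_zero_right, EuclideanSpace.norm_eq]
  refine Real.sqrt_le_sqrt ?_
  refine Finset.sum_le_sum fun i _ => ?_
  have h := hMsp i α hα
  have : ‖α i‖ = |α i| := Real.norm_eq_abs _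
  rw [this]
  calc |α i| ^ 2 ≤ (M i) ^ 2 := by
        have h0 : (0:ℝ) ≤ |α i| := abs_nonneg _
        nlinarith
    _ = M i ^ 2 := rfl

lemma isClosed_Dset (hA1 : A1 μ) : IsClosed (Dset μ) := by
  have hset : Dset μ = ⋂ F : Finset (Zd d),
      {α : V d | ∑ k ∈ F, μ k * Real.exp (dotZ α k) ≤ 1} := by
    ext α
    constructor
    · intro hα
      refine Set.mem_iInter.2 fun F => ?_
      have hsum := summable_on_D hA1 hα
      exact le_trans (Summable.sum_le_tsum F
        (fun k _ => mul_nonneg (hA1.1.1 k) (Real.exp_pos _).le) hsum) hα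
    · intro hmem
      have h' : ∀ F : Finset (Zd d), ∑ k ∈ F, μ k * Real.exp (dotZ α k) ≤ 1 :=
        fun F => Set.mem_iInter.1 hmem F
      have hsum : Summable fun k : Zd d => μ k * Real.exp (dotZ α k) :=
        summable_of_sum_le (fun k => mul_nonneg (hA1.1.1 k) (Real.exp_pos _).le) h'
      exact Summable.tsum_le_of_sum_le hsum h'
  rw [hset]
  refine isClosed_iInter fun F => ?_
  refine isClosed_le ?_ continuous_const
  refine continuous_finset_sum F fun k _ => ?_
  refine Continuous.mul continuous_const (Real.continuous_exp.comp ?_)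
  unfold dotZ
  refine continuous_finset_sum _ fun i _ => ?_
  exact ((EuclideanSpace.proj i : V d →L[ℝ] ℝ).continuous).mul continuous_const

lemma convex_ineq (hA1 : A1 μ) {α β : V d}
    (hα : Summable fun k : Zd d => μ k * Real.exp (dotZ α k))
    (hβ : Summable fun k : Zd d => μ k * Real.exp (dotZ β k))
    {s t : ℝ} (hs : 0 ≤ s) (ht : 0 ≤ t) (hst : s + t = 1) :
    (Summable fun k : Zd d => μ k * Real.exp (dotZ (s • α + t • β) k)) ∧
      Pgen μ (s • α + t • β) ≤ s * Pgen μ α + t * Pgen μ β := by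
  set g : Zd d → ℝ := fun k =>
    s * (μ k * Real.exp (dotZ α k)) + t * (μ k * Real.exp (dotZ β k)) with hg
  have hgsum : Summable g := (hα.mul_left s).add (hβ.mul_left t)
  have hle : ∀ k : Zd d, μ k * Real.exp (dotZ (s • α + t • β) k) ≤ g k := by
    intro k
    rw [dotZ_combo]
    have hexp : Real.exp (s * dotZ α k + t * dotZ β k) ≤
        s * Real.exp (dotZ α k) + t * Real.exp (dotZ β k) := by
      have := convexOn_exp.2 (Set.mem_univ (dotZ α k)) (Set.mem_univ (dotZ β k)) hs ht hst
      simpa [smul_eq_mul] using this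
    calc μ k * Real.exp (s * dotZ α k + t * dotZ β k)
        ≤ μ k * (s * Real.exp (dotZ α k) + t * Real.exp (dotZ β k)) :=
          mul_le_mul_of_nonneg_left hexp (hA1.1.1 k)
      _ = g k := by rw [hg]; ring
  have hnn : ∀ k : Zd d, 0 ≤ μ k * Real.exp (dotZ (s • α + t • β) k) :=
    fun k => mul_nonneg (hA1.1.1 k) (Real.exp_pos _).le
  have hsumγ : Summable fun k : Zd d => μ k * Real.exp (dotZ (s • α + t • β) k) :=
    Summable.of_nonneg_of_le hnn hle hgsum
  refine ⟨hsumγ, ?_⟩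
  have h1 : Pgen μ (s • α + t • β) ≤ ∑' k, g k := Summable.tsum_le_tsum hle hsumγ hgsum
  have h2 : ∑' k, g k = s * Pgen μ α + t * Pgen μ β := by
    rw [hg]
    rw [Summable.tsum_add (hα.mul_left s) (hβ.mul_left t), tsum_mul_left, tsum_mul_left]
    rfl
  rw [← h2]; exact h1

lemma exists_sep (hA1 : A1 μ) {v : V d} (hv : v ≠ 0) :
    ∃ k : Zd d, 0 < μ k ∧ dotZ v k ≠ 0 := by
  by_contra hcon
  push_neg at hcon
  have hvan : ∀ k : Zd d, 0 < μ k → dotZ v k = 0 := hcon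
  have hstep : ∀ n (m : Zd d), 0 < stepProb μ n m → dotZ v m = 0 := by
    intro n
    induction n with
    | zero =>
      intro m hm
      have : m = 0 := by
        by_contra h0
        have : stepProb μ 0 m = 0 := by unfold stepProb; simp [h0]
        rw [this] at hm; exact lt_irrefl 0 hm
      rw [this, dotZ_zero_right]
    | succ n ih =>
      intro m hm
      have hex : ∃ j : Zd d, stepProb μ n j * μ (m - j) ≠ 0 := by
        by_contra hno
        push_neg at hno
        have : stepProb μ (n+1) m = 0 := by
          unfold stepProb
          rw [tsum_congr hno]
          exact tsum_zero
        rw [this] at hm; exact lt_irrefl 0 hm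
      obtain ⟨j, hj⟩ := hex
      have hj1 : stepProb μ n j ≠ 0 := fun h => hj (by rw [h, zero_mul])
      have hj2 : μ (m - j) ≠ 0 := fun h => hj (by rw [h, mul_zero])
      have h1 : 0 < stepProb μ n j := lt_of_le_of_ne (stepProb_nonneg hA1.1 n j) (Ne.symm hj1)
      have h2 : 0 < μ (m - j) := lt_of_le_of_ne (hA1.1.1 _) (Ne.symm hj2)
      rw [dotZ_split v m j, ih j h1, hvan _ h2, add_zero]
  apply hv
  have hcoord : ∀ i : Fin d, v i = 0 := by
    intro i
    obtain ⟨n, hn⟩ := hA1.2.1 (eZ i)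
    rw [← dotZ_eZ v i]
    exact hstep n (eZ i) hn
  ext i
  exact hcoord i

lemma strict_lt (hA1 : A1 μ) {α β : V d} (hα : α ∈ Dset μ) (hβ : β ∈ Dset μ)
    (hne : α ≠ β) {s t : ℝ} (hs : 0 < s) (ht : 0 < t) (hst : s + t = 1) :
    Pgen μ (s • α + t • β) < 1 := by
  have hαs := summable_on_D hA1 hα
  have hβs := summable_on_D hA1 hβ
  have hvne : α - β ≠ 0 := sub_ne_zero.2 hne
  obtain ⟨k₀, hk₀pos, hk₀⟩ := exists_sep hA1 hvne
  have hkne : dotZ α k₀ ≠ dotZ β k₀ := by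
    intro h
    apply hk₀
    have : dotZ (α - β) k₀ = dotZ α k₀ - dotZ β k₀ := by
      have := dotZ_combo α β 1 (-1) k₀
      simpa [one_smul, neg_one_smul, sub_eq_add_neg] using this
    rw [this, h, sub_self]
  set g : Zd d → ℝ := fun k =>
    s * (μ k * Real.exp (dotZ α k)) + t * (μ k * Real.exp (dotZ β k)) with hg
  have hgsum : Summable g := (hαs.mul_left s).add (hβs.mul_left t)
  have hle : ∀ k : Zd d, μ k * Real.exp (dotZ (s • α + t • β) k) ≤ g k := by
    intro k
    rw [dotZ_combo]
    have hexp : Real.exp (s * dotZ α k + t * dotZ β k) ≤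
        s * Real.exp (dotZ α k) + t * Real.exp (dotZ β k) := by
      have := convexOn_exp.2 (Set.mem_univ (dotZ α k)) (Set.mem_univ (dotZ β k))
        hs.le ht.le hst
      simpa [smul_eq_mul] using this
    calc μ k * Real.exp (s * dotZ α k + t * dotZ β k)
        ≤ μ k * (s * Real.exp (dotZ α k) + t * Real.exp (dotZ β k)) :=
          mul_le_mul_of_nonneg_left hexp (hA1.1.1 k)
      _ = g k := by rw [hg]; ring
  have hstrict : μ k₀ * Real.exp (dotZ (s • α + t • β) k₀) < g k₀ := by
    rw [dotZ_combo]
    have hexp : Real.exp (s * dotZ α k₀ + t * dotZ β k₀) <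
        s * Real.exp (dotZ α k₀) + t * Real.exp (dotZ β k₀) := by
      have := strictConvexOn_exp.2 (Set.mem_univ (dotZ α k₀)) (Set.mem_univ (dotZ β k₀))
        hkne hs ht hst
      simpa [smul_eq_mul] using this
    calc μ k₀ * Real.exp (s * dotZ α k₀ + t * dotZ β k₀)
        < μ k₀ * (s * Real.exp (dotZ α k₀) + t * Real.exp (dotZ β k₀)) :=
          (mul_lt_mul_iff_right₀ hk₀pos).2 hexp
      _ = g k₀ := by rw [hg]; ring
  have hsumγ : Summable fun k : Zd d => μ k * Real.exp (dotZ (s • α + t • β) k) :=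
    Summable.of_nonneg_of_le (fun k => mul_nonneg (hA1.1.1 k) (Real.exp_pos _).le)
      hle hgsum
  have hlt : Pgen μ (s • α + t • β) < ∑' k, g k :=
    Summable.tsum_lt_tsum hle hstrict hsumγ hgsum
  have h2 : ∑' k, g k = s * Pgen μ α + t * Pgen μ β := by
    rw [hg, Summable.tsum_add (hαs.mul_left s) (hβs.mul_left t), tsum_mul_left, tsum_mul_left]
    rfl
  have h3 : s * Pgen μ α + t * Pgen μ β ≤ 1 := by
    have h4 : s * Pgen μ α ≤ s * 1 := mul_le_mul_of_nonneg_left hα hs.le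
    have h5 : t * Pgen μ β ≤ t * 1 := mul_le_mul_of_nonneg_left hβ ht.le
    linarith
  rw [h2] at hlt
  linarith

lemma mem_interior_Dset (hA1 : A1 μ) {γ : V d}
    (hsum : Summable fun k : Zd d => μ k * Real.exp (dotZ γ k))
    (hlt : Pgen μ γ < 1) : γ ∈ interior (Dset μ) := by
  obtain ⟨U, hUopen, hDU, hUsum⟩ := hA1.2.2.1
  have hγD : γ ∈ Dset μ := show Pgen μ γ ≤ 1 from le_of_lt hlt
  have hγU : γ ∈ U := hDU hγD
  obtain ⟨ε, hε0, hball⟩ := Metric.isOpen_iff.1 hUopen γ hγU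
  have hconv : ConvexOn ℝ (Metric.ball γ ε) (Pgen μ) := by
    refine ⟨convex_ball γ ε, fun x hx y hy a b ha hb hab => ?_⟩
    have hxs := hUsum x (hball hx)
    have hys := hUsum y (hball hy)
    have := (convex_ineq hA1 hxs hys ha hb hab).2
    simpa [smul_eq_mul] using this
  have hcont : ContinuousOn (Pgen μ) (Metric.ball γ ε) :=
    hconv.continuousOn Metric.isOpen_ball
  have hca : ContinuousAt (Pgen μ) γ :=
    hcont.continuousAt (Metric.isOpen_ball.mem_nhds (Metric.mem_ball_self hε0))
  have hev : ∀ᶠ x in nhds γ, Pgen μ x < 1 := hca.eventually_lt_const hlt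
  rw [mem_interior_iff_mem_nhds]
  exact Filter.mem_of_superset hev fun x hx => show Pgen μ x ≤ 1 from le_of_lt hx

end Aux

/-- Under (A1), the set D = {α : P(α) ≤ 1} is compact and strictly convex. -/
theorem statement0 {d : ℕ} (μ : Zd d → ℝ) (hA1 : A1 μ) :
    IsCompact (Dset μ) ∧ StrictConvex ℝ (Dset μ) := by
  refine ⟨Metric.isCompact_of_isClosed_isBounded (isClosed_Dset hA1) (isBounded_Dset hA1), ?_⟩
  intro x hx y hy hne a b ha hb hab
  have hlt := strict_lt hA1 hx hy hne ha hb hab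
  have hsum := (convex_ineq hA1 (summable_on_D hA1 hx) (summable_on_D hA1 hy)
    ha.le hb.le hab).1
  exact mem_interior_Dset hA1 hsum hlt
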